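/- Define the maximal expected throughput E[T](K) = α_K · Γ(K, α_K) / (K · Γ(K)), where α_K > 0 is the unique solution of Γ(K, α) = α^K e^{-α}. Then lim_{K→∞} E[T](K) = 1. -/

import Mathlib

open MeasureTheory Real

/-- Upper incomplete Gamma function `Γ(K, x) = ∫_x^∞ z^(K-1) e^(-z) dz` for integer `K`. -/
noncomputable def Ginc (K : ℕ) (x : ℝ) : ℝ := ∫ z in Set.Ioi x, z ^ (K - 1) * Real.exp (-z)

open Finset

/-- the polynomial `S n x = ∑_{j≤n} (n!/j!) x^j`, so that `Ginc (n+1) x = e^{-x} S n x`. -/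
noncomputable def Spoly (n : ℕ) (x : ℝ) : ℝ :=
  ∑ j ∈ range (n+1), ((n.factorial : ℝ) / (j.factorial : ℝ)) * x ^ j

lemma key_id (n : ℕ) (x : ℝ) :
    ∑ j ∈ range (n+1), ((n.factorial : ℝ) / (j.factorial : ℝ)) * ((j : ℝ) * x ^ (j-1))
      = Spoly n x - x ^ n := by
  have h1 : ∀ j : ℕ, ((n.factorial : ℝ) / (j.factorial : ℝ)) * x ^ j
      = (n.factorial : ℝ) * (x ^ j / (j.factorial : ℝ)) := by
    intro j; ring
  have h2 : ∀ j : ℕ, ((n.factorial : ℝ) / ((j+1).factorial : ℝ)) * (((j:ℝ)+1) * x ^ j)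
      = (n.factorial : ℝ) * (x ^ j / (j.factorial : ℝ)) := by
    intro j
    rw [Nat.factorial_succ]
    push_cast
    have hj : (j.factorial : ℝ) ≠ 0 := by exact_mod_cast j.factorial_ne_zero
    field_simp
  rw [Finset.sum_range_succ' (fun j => ((n.factorial : ℝ) / (j.factorial : ℝ)) * ((j : ℝ) * x ^ (j-1)))]
  simp only [Nat.cast_zero, zero_mul, mul_zero, add_zero, Nat.cast_add, Nat.cast_one,
    Nat.add_sub_cancel]
  have : ∀ i ∈ range n, ((n.factorial : ℝ) / ((i+1).factorial : ℝ)) * (((i:ℝ)+1) * x ^ i)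
      = (n.factorial : ℝ) * (x ^ i / (i.factorial : ℝ)) := fun i _ => h2 i
  rw [Finset.sum_congr rfl this]
  unfold Spoly
  rw [Finset.sum_range_succ (fun j => ((n.factorial : ℝ) / (j.factorial : ℝ)) * x ^ j)]
  rw [Finset.sum_congr rfl (fun i _ => h1 i)]
  simp [div_self (show (n.factorial : ℝ) ≠ 0 by exact_mod_cast n.factorial_ne_zero)]

lemma hasDerivAt_Spoly (n : ℕ) (x : ℝ) :
    HasDerivAt (Spoly n) (Spoly n x - x ^ n) x := by
  rw [← key_id n x]
  unfold Spoly
  exact HasDerivAt.fun_sum (fun j _ => (hasDerivAt_pow j x).const_mul _)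

lemma hasDerivAt_expS (n : ℕ) (x : ℝ) :
    HasDerivAt (fun x => Real.exp (-x) * Spoly n x) (-(x ^ n * Real.exp (-x))) x := by
  have he : HasDerivAt (fun x : ℝ => Real.exp (-x)) (-Real.exp (-x)) x := by
    simpa using (hasDerivAt_neg x).exp
  have := he.fun_mul (hasDerivAt_Spoly n x)
  exact this.congr_deriv (by ring)

lemma hasDerivAt_g (n : ℕ) (x : ℝ) :
    HasDerivAt (fun x => Real.exp (-x) * (x * Spoly n x))
      (Real.exp (-x) * (Spoly n x - x ^ (n+1))) x := by
  have he : HasDerivAt (fun x : ℝ => Real.exp (-x)) (-Real.exp (-x)) x := by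
    simpa using (hasDerivAt_neg x).exp
  have hx : HasDerivAt (fun x : ℝ => x * Spoly n x)
      (1 * Spoly n x + x * (Spoly n x - x ^ n)) x :=
    (hasDerivAt_id x).mul (hasDerivAt_Spoly n x)
  have := he.fun_mul hx
  exact this.congr_deriv (by ring)

lemma tendsto_expS (n : ℕ) :
    Filter.Tendsto (fun x => Real.exp (-x) * Spoly n x) Filter.atTop (nhds 0) := by
  unfold Spoly
  have : ∀ x : ℝ, Real.exp (-x) * ∑ j ∈ range (n+1), ((n.factorial : ℝ) / (j.factorial : ℝ)) * x ^ j
      = ∑ j ∈ range (n+1), ((n.factorial : ℝ) / (j.factorial : ℝ)) * (x ^ j * Real.exp (-x)) := by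
    intro x; rw [Finset.mul_sum]; exact Finset.sum_congr rfl fun j _ => by ring
  simp only [this]
  have h0 : (0:ℝ) = ∑ j ∈ range (n+1), ((n.factorial : ℝ) / (j.factorial : ℝ)) * 0 := by simp
  rw [h0]
  exact tendsto_finset_sum _ fun j _ =>
    (tendsto_pow_mul_exp_neg_atTop_nhds_zero j).const_mul _

lemma Ginc_eq (n : ℕ) (a : ℝ) (ha : 0 ≤ a) :
    Ginc (n+1) a = Real.exp (-a) * Spoly n a := by
  have key := integral_Ioi_of_hasDerivAt_of_nonneg'
    (g := fun x => -(Real.exp (-x) * Spoly n x)) (g' := fun z => z ^ n * Real.exp (-z))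
    (a := a) (l := 0)
    (fun x _ => (hasDerivAt_expS n x).neg.congr_deriv (by ring))
    (fun x hx => mul_nonneg (pow_nonneg (le_of_lt (lt_of_le_of_lt ha hx)) n)
      (Real.exp_nonneg _))
    (by simpa using (tendsto_expS n).neg)
  unfold Ginc
  simp only [Nat.add_sub_cancel]
  rw [key]
  ring

/-- for `0 ≤ x ≤ y` : `S(y) x^{n+1} ≤ S(x) y^{n+1}`, termwise. -/
lemma Spoly_ratio (n : ℕ) {x y : ℝ} (hx : 0 ≤ x) (hxy : x ≤ y) :
    Spoly n y * x ^ (n+1) ≤ Spoly n x * y ^ (n+1) := by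
  unfold Spoly
  rw [Finset.sum_mul, Finset.sum_mul]
  apply Finset.sum_le_sum
  intro j hj
  have hjn : j ≤ n := Nat.lt_succ_iff.mp (Finset.mem_range.mp hj)
  have hy : 0 ≤ y := hx.trans hxy
  have hc : 0 ≤ ((n.factorial : ℝ) / (j.factorial : ℝ)) := by positivity
  rw [mul_assoc, mul_assoc]
  apply mul_le_mul_of_nonneg_left _ hc
  have hsplit : n + 1 = j + (n + 1 - j) := by omega
  rw [hsplit, pow_add x, pow_add y, ← mul_assoc, ← mul_assoc]
  rw [mul_comm (y ^ j) (x ^ j)]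
  apply mul_le_mul_of_nonneg_left _ (by positivity)
  gcongr

/-- the root of `S(a) = a^{n+1}` maximizes `g(x) = e^{-x} x S(x)` on `[0, ∞)`. -/
lemma g_max (n : ℕ) {a : ℝ} (hapos : 0 < a) (hroot : Spoly n a = a ^ (n+1))
    {x : ℝ} (hx : 0 ≤ x) :
    Real.exp (-x) * (x * Spoly n x) ≤ Real.exp (-a) * (a * Spoly n a) := by
  set g : ℝ → ℝ := fun x => Real.exp (-x) * (x * Spoly n x) with hg
  have hderiv : ∀ t : ℝ, HasDerivAt g (Real.exp (-t) * (Spoly n t - t ^ (n+1))) t :=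
    fun t => hasDerivAt_g n t
  have hcont : Continuous g :=
    (Differentiable.continuous fun t => (hderiv t).differentiableAt)
  rcases le_total x a with hxa | hax
  · have hmono : MonotoneOn g (Set.Icc 0 a) := by
      apply monotoneOn_of_deriv_nonneg (convex_Icc 0 a) hcont.continuousOn
      · intro t ht
        exact ((hderiv t).differentiableAt).differentiableWithinAt
      · intro t ht
        rw [interior_Icc] at ht
        rw [(hderiv t).deriv]
        have htpos : 0 < t := ht.1
        have hta : t ≤ a := ht.2.le
        have h1 := Spoly_ratio n htpos.le hta
        rw [hroot] at h1
        have h2 : t ^ (n+1) ≤ Spoly n t := by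
          have hap : (0:ℝ) < a ^ (n+1) := pow_pos hapos _
          nlinarith
        have : 0 ≤ Spoly n t - t ^ (n+1) := by linarith
        positivity
    exact hmono ⟨hx, hxa⟩ ⟨le_of_lt hapos, le_refl a⟩ hxa
  · have hanti : AntitoneOn g (Set.Ici a) := by
      apply antitoneOn_of_deriv_nonpos (convex_Ici a) hcont.continuousOn
      · intro t ht
        exact ((hderiv t).differentiableAt).differentiableWithinAt
      · intro t ht
        rw [interior_Ici] at ht
        rw [(hderiv t).deriv]
        have hat : a ≤ t := ht.le
        have h1 := Spoly_ratio n hapos.le hat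
        rw [hroot] at h1
        have h2 : Spoly n t ≤ t ^ (n+1) := by
          have hap : (0:ℝ) < a ^ (n+1) := pow_pos hapos _
          nlinarith
        have hexp : 0 ≤ Real.exp (-t) := Real.exp_nonneg _
        nlinarith
    exact hanti (Set.self_mem_Ici) hax hax

lemma exp_real_tsum (x : ℝ) : Real.exp x = ∑' n : ℕ, x ^ n / (n.factorial : ℝ) := by
  rw [Real.exp_eq_exp_ℝ, NormedSpace.exp_eq_tsum_div]

lemma tail_le {δ : ℝ} (h0 : 0 < δ) (h1 : δ < 1) (K : ℕ) (hK : 1 ≤ K) :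
    Real.exp (δ*K) - ∑ j ∈ range K, (δ*K)^j/(j.factorial:ℝ)
      ≤ (δ*K)^K/(K.factorial:ℝ) * (1-δ)⁻¹ := by
  set lam : ℝ := δ * K with hlam
  have hlam0 : 0 ≤ lam := by positivity
  have hsum : Summable (fun n : ℕ => lam ^ n / (n.factorial : ℝ)) :=
    Real.summable_pow_div_factorial lam
  have hsplit := Summable.sum_add_tsum_nat_add (f := fun n : ℕ => lam ^ n / (n.factorial : ℝ)) K hsum
  rw [exp_real_tsum lam, ← hsplit]
  have hshift : Summable (fun i : ℕ => lam ^ (i + K) / ((i + K).factorial : ℝ)) :=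
    (summable_nat_add_iff K).2 hsum
  have hKpos : (0:ℝ) < K := by exact_mod_cast hK
  have hterm : ∀ i : ℕ, lam ^ (i + K) / ((i + K).factorial : ℝ)
      ≤ (lam ^ K / (K.factorial : ℝ)) * δ ^ i := by
    intro i
    have hfac : (K.factorial : ℝ) * (K:ℝ) ^ i ≤ ((i + K).factorial : ℝ) := by
      have h := Nat.factorial_mul_pow_le_factorial (m := K) (n := i)
      have h2 : K.factorial * K ^ i ≤ K.factorial * (K+1) ^ i :=
        Nat.mul_le_mul_left _ (Nat.pow_le_pow_left (Nat.le_succ K) i)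
      have := le_trans h2 h
      rw [Nat.add_comm K i] at this
      exact_mod_cast this
    have hnum : lam ^ (i + K) = lam ^ K * δ ^ i * (K:ℝ) ^ i := by
      rw [pow_add, hlam, mul_pow]; ring
    have hfacpos : (0:ℝ) < (K.factorial : ℝ) * (K:ℝ) ^ i := by positivity
    calc lam ^ (i + K) / ((i + K).factorial : ℝ)
        ≤ lam ^ (i + K) / ((K.factorial : ℝ) * (K:ℝ) ^ i) := by
          apply div_le_div_of_nonneg_left (by positivity) hfacpos hfac
      _ = (lam ^ K / (K.factorial : ℝ)) * δ ^ i := by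
          rw [hnum]; field_simp
  have hgeo : Summable (fun i : ℕ => (lam ^ K / (K.factorial : ℝ)) * δ ^ i) :=
    (summable_geometric_of_lt_one h0.le h1).mul_left _
  calc ∑ j ∈ range K, lam^j/(j.factorial:ℝ) + (∑' i : ℕ, lam ^ (i + K) / ((i + K).factorial : ℝ))
      - ∑ j ∈ range K, lam^j/(j.factorial:ℝ)
      = ∑' i : ℕ, lam ^ (i + K) / ((i + K).factorial : ℝ) := by ring
    _ ≤ ∑' i : ℕ, (lam ^ K / (K.factorial : ℝ)) * δ ^ i := Summable.tsum_le_tsum hterm hshift hgeo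
    _ = (lam ^ K / (K.factorial : ℝ)) * (1-δ)⁻¹ := by
        rw [tsum_mul_left, tsum_geometric_of_lt_one h0.le h1]

lemma pow_div_fact_le (K : ℕ) : ((K:ℝ)) ^ K / (K.factorial : ℝ) ≤ Real.exp K := by
  have h := Real.sum_le_exp_of_nonneg (x := (K:ℝ)) (by positivity) (K+1)
  have h2 : (K:ℝ) ^ K / (K.factorial : ℝ) ≤ ∑ i ∈ range (K+1), (K:ℝ) ^ i / (i.factorial : ℝ) := by
    exact Finset.single_le_sum (f := fun i : ℕ => (K:ℝ) ^ i / (i.factorial : ℝ))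
      (fun i _ => by positivity) (Finset.self_mem_range_succ K)
  linarith

/-- Poisson concentration: `P(Pois(δK) ≤ K-1) → 1` for `δ < 1`. -/
lemma pois_conc {δ : ℝ} (h0 : 0 < δ) (h1 : δ < 1) :
    Filter.Tendsto (fun K : ℕ => Real.exp (-(δ*K)) * ∑ j ∈ range K, (δ*K)^j / (j.factorial:ℝ))
      Filter.atTop (nhds 1) := by
  set r : ℝ := δ * Real.exp (1 - δ) with hr
  have hr0 : 0 ≤ r := by positivity
  have hr1 : r < 1 := by
    have := Real.add_one_lt_exp (x := δ - 1) (sub_ne_zero.2 h1.ne)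
    have hd : δ < Real.exp (δ - 1) := by linarith
    have : r < Real.exp (δ - 1) * Real.exp (1 - δ) :=
      (mul_lt_mul_of_pos_right hd (Real.exp_pos _))
    rwa [← Real.exp_add, show δ - 1 + (1 - δ) = 0 by ring, Real.exp_zero] at this
  have hlow : ∀ᶠ K : ℕ in Filter.atTop,
      1 - r ^ K * (1-δ)⁻¹ ≤ Real.exp (-(δ*K)) * ∑ j ∈ range K, (δ*K)^j / (j.factorial:ℝ) := by
    filter_upwards [Filter.eventually_ge_atTop 1] with K hK
    have htail := tail_le h0 h1 K hK
    have hbound : Real.exp (-(δ*K)) * ((δ*K)^K/(K.factorial:ℝ)) ≤ r ^ K := by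
      have h2 : ((δ:ℝ)*K)^K/(K.factorial:ℝ) ≤ δ^K * Real.exp K := by
        rw [mul_pow, mul_div_assoc]
        exact mul_le_mul_of_nonneg_left (pow_div_fact_le K) (by positivity)
      have h3 : Real.exp (-(δ*K)) * (δ^K * Real.exp K) = r ^ K := by
        have he : (K:ℝ)*(1-δ) = -(δ*K) + K := by ring
        rw [hr, mul_pow, ← Real.exp_nat_mul, he, Real.exp_add]
        ring
      calc Real.exp (-(δ*K)) * ((δ*K)^K/(K.factorial:ℝ))
          ≤ Real.exp (-(δ*K)) * (δ^K * Real.exp K) :=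
            mul_le_mul_of_nonneg_left h2 (Real.exp_nonneg _)
        _ = r ^ K := h3
    have hexp : Real.exp (-(δ*K)) * Real.exp (δ*K) = 1 := by
      rw [← Real.exp_add]; simp
    have := mul_le_mul_of_nonneg_left htail (Real.exp_nonneg (-(δ*K)))
    rw [mul_sub] at this
    have h4 : Real.exp (-(δ*K)) * ((δ*K)^K/(K.factorial:ℝ) * (1-δ)⁻¹) ≤ r ^ K * (1-δ)⁻¹ := by
      rw [← mul_assoc]
      exact mul_le_mul_of_nonneg_right hbound (inv_nonneg.2 (by linarith))
    nlinarith [Real.exp_nonneg (-(δ*K))]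
  have hup : ∀ᶠ K : ℕ in Filter.atTop,
      Real.exp (-(δ*K)) * ∑ j ∈ range K, (δ*K)^j / (j.factorial:ℝ) ≤ 1 := by
    filter_upwards with K
    have hs := Real.sum_le_exp_of_nonneg (x := δ*K) (by positivity) K
    calc Real.exp (-(δ*K)) * ∑ j ∈ range K, (δ*K)^j / (j.factorial:ℝ)
        ≤ Real.exp (-(δ*K)) * Real.exp (δ*K) :=
          mul_le_mul_of_nonneg_left hs (Real.exp_nonneg _)
      _ = 1 := by rw [← Real.exp_add]; simp
  have hl : Filter.Tendsto (fun K : ℕ => 1 - r ^ K * (1-δ)⁻¹) Filter.atTop (nhds 1) := by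
    have : Filter.Tendsto (fun K : ℕ => r ^ K * (1-δ)⁻¹) Filter.atTop (nhds 0) := by
      simpa using (tendsto_pow_atTop_nhds_zero_of_lt_one hr0 hr1).mul_const (1-δ)⁻¹
    simpa using (tendsto_const_nhds (x := (1:ℝ))).sub this
  exact tendsto_of_tendsto_of_tendsto_of_le_of_le' hl tendsto_const_nhds hlow hup

lemma g_le (n : ℕ) {a : ℝ} (ha : 0 ≤ a) :
    Real.exp (-a) * (a * Spoly n a) ≤ ((n+1).factorial : ℝ) := by
  have h1 : a * Spoly n a ≤ ((n+1).factorial : ℝ) * (Real.exp a - 1) := by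
    unfold Spoly
    rw [Finset.mul_sum]
    have hterm : ∀ j ∈ range (n+1),
        a * (((n.factorial : ℝ) / (j.factorial : ℝ)) * a ^ j)
          ≤ ((n+1).factorial : ℝ) * (a ^ (j+1) / ((j+1).factorial : ℝ)) := by
      intro j hj
      have hjn : j ≤ n := Nat.lt_succ_iff.mp (Finset.mem_range.mp hj)
      have hcoef : ((n.factorial : ℝ) / (j.factorial : ℝ))
          ≤ ((n+1).factorial : ℝ) / ((j+1).factorial : ℝ) := by
        rw [div_le_div_iff₀ (by positivity) (by positivity)]
        have : n.factorial * (j+1).factorial ≤ (n+1).factorial * j.factorial := by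
          rw [Nat.factorial_succ (j), Nat.factorial_succ n]
          calc n.factorial * ((j+1) * j.factorial) = (j+1) * (n.factorial * j.factorial) := by ring
            _ ≤ (n+1) * (n.factorial * j.factorial) :=
                Nat.mul_le_mul_right _ (by omega)
            _ = (n+1) * n.factorial * j.factorial := by ring
        exact_mod_cast this
      have hpow : (0:ℝ) ≤ a ^ (j+1) := by positivity
      calc a * (((n.factorial : ℝ) / (j.factorial : ℝ)) * a ^ j)
          = ((n.factorial : ℝ) / (j.factorial : ℝ)) * a ^ (j+1) := by ring
        _ ≤ (((n+1).factorial : ℝ) / ((j+1).factorial : ℝ)) * a ^ (j+1) :=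
            mul_le_mul_of_nonneg_right hcoef hpow
        _ = ((n+1).factorial : ℝ) * (a ^ (j+1) / ((j+1).factorial : ℝ)) := by ring
    calc ∑ j ∈ range (n+1), a * (((n.factorial : ℝ) / (j.factorial : ℝ)) * a ^ j)
        ≤ ∑ j ∈ range (n+1), ((n+1).factorial : ℝ) * (a ^ (j+1) / ((j+1).factorial : ℝ)) :=
          Finset.sum_le_sum hterm
      _ = ((n+1).factorial : ℝ) * ∑ j ∈ range (n+1), a ^ (j+1) / ((j+1).factorial : ℝ) := by
          rw [Finset.mul_sum]
      _ ≤ ((n+1).factorial : ℝ) * (Real.exp a - 1) := by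
          apply mul_le_mul_of_nonneg_left _ (by positivity)
          have hsplit := Finset.sum_range_succ' (fun i => a ^ i / (i.factorial : ℝ)) (n+1)
          have hle := Real.sum_le_exp_of_nonneg ha (n+2)
          simp only [pow_zero, Nat.factorial_zero, Nat.cast_one, div_one] at hsplit
          rw [hsplit] at hle
          linarith
  have he : 0 ≤ Real.exp (-a) := Real.exp_nonneg _
  have h2 : Real.exp (-a) * (a * Spoly n a)
      ≤ Real.exp (-a) * (((n+1).factorial : ℝ) * (Real.exp a - 1)) :=
    mul_le_mul_of_nonneg_left h1 he
  have h3 : Real.exp (-a) * Real.exp a = 1 := by rw [← Real.exp_add]; simp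
  have hfac : (0:ℝ) < ((n+1).factorial : ℝ) := by exact_mod_cast Nat.factorial_pos (n+1)
  nlinarith [Real.exp_nonneg (-a)]

lemma Spoly_div (n : ℕ) (x : ℝ) :
    Spoly n x / (n.factorial : ℝ) = ∑ j ∈ range (n+1), x ^ j / (j.factorial : ℝ) := by
  unfold Spoly
  rw [Finset.sum_div]
  apply Finset.sum_congr rfl
  intro j _
  have hn : (n.factorial : ℝ) ≠ 0 := by exact_mod_cast n.factorial_ne_zero
  have hj : (j.factorial : ℝ) ≠ 0 := by exact_mod_cast j.factorial_ne_zero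
  field_simp

/-- with `α_K` the unique positive root of `Γ(K, α) = α^K e^{-α}`,
the maximal expected throughput `E[T](K) = α_K Γ(K, α_K)/(K Γ(K))` tends to `1`. -/
theorem stmt14 (α : ℕ → ℝ)
    (hα : ∀ K : ℕ, 1 ≤ K → 0 < α K ∧ Ginc K (α K) = (α K) ^ K * Real.exp (-(α K))) :
    Filter.Tendsto
      (fun K : ℕ => α K * Ginc K (α K) / ((K : ℝ) * (Nat.factorial (K - 1) : ℝ)))
      Filter.atTop (nhds 1) := by
  -- rewriting of the quantity for K = n+1
  have hmain : ∀ K : ℕ, 1 ≤ K → ∀ n : ℕ, K = n + 1 →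
      (α K * Ginc K (α K) / ((K : ℝ) * (Nat.factorial (K - 1) : ℝ))
        = Real.exp (-(α K)) * (α K * Spoly n (α K)) / (((n+1).factorial : ℝ)))
      ∧ Spoly n (α K) = (α K) ^ (n+1) := by
    intro K hK n hKn
    subst hKn
    obtain ⟨hpos, heq⟩ := hα (n+1) hK
    have hGeq := Ginc_eq n (α (n+1)) hpos.le
    have hexpne : Real.exp (-(α (n+1))) ≠ 0 := (Real.exp_pos _).ne'
    have hS : Spoly n (α (n+1)) = (α (n+1)) ^ (n+1) := by
      have h' : Spoly n (α (n+1)) * Real.exp (-(α (n+1)))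
          = (α (n+1)) ^ (n+1) * Real.exp (-(α (n+1))) := by
        rw [mul_comm (Spoly n (α (n+1)))]
        rw [← hGeq]; exact heq
      exact mul_right_cancel₀ hexpne h'
    refine ⟨?_, hS⟩
    rw [hGeq]
    have hfac : ((n+1:ℕ) : ℝ) * ((n + 1 - 1).factorial : ℝ) = (((n+1).factorial : ℝ)) := by
      simp [Nat.factorial_succ]
    rw [hfac]
    ring_nf
  rw [tendsto_order]
  constructor
  · -- lower bound: for any b < 1, eventually b < E K
    intro b hb
    set δ : ℝ := (1 + max b 0) / 2 with hδ
    have hm0 : 0 ≤ max b 0 := le_max_right b 0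
    have hm1 : max b 0 < 1 := max_lt hb one_pos
    have hδ0 : 0 < δ := by rw [hδ]; linarith
    have hδ1 : δ < 1 := by rw [hδ]; linarith
    have hbδ : b < δ := by
      have : b ≤ max b 0 := le_max_left b 0
      rw [hδ]; linarith
    have hconc := pois_conc hδ0 hδ1
    have hev : ∀ᶠ K : ℕ in Filter.atTop,
        b/δ < Real.exp (-(δ*K)) * ∑ j ∈ range K, (δ*K)^j / (j.factorial:ℝ) :=
      hconc.eventually (eventually_gt_nhds ((div_lt_one hδ0).2 hbδ))
    filter_upwards [hev, Filter.eventually_ge_atTop 1] with K hTK hK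
    obtain ⟨n, hKn⟩ : ∃ n, K = n + 1 := ⟨K - 1, by omega⟩
    subst hKn
    obtain ⟨hE, hS⟩ := hmain (n+1) hK n rfl
    rw [hE]
    obtain ⟨hpos, _⟩ := hα (n+1) hK
    set lam : ℝ := δ * ((n+1 : ℕ) : ℝ) with hlam
    have hlam0 : 0 ≤ lam := by positivity
    have hgm := g_max n (a := α (n+1)) hpos hS (x := lam) hlam0
    have hfacpos : (0:ℝ) < ((n+1).factorial : ℝ) := by
      exact_mod_cast Nat.factorial_pos (n+1)
    have hglam : Real.exp (-lam) * (lam * Spoly n lam) / (((n+1).factorial : ℝ))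
        = δ * (Real.exp (-(δ*((n+1:ℕ):ℝ))) * ∑ j ∈ range (n+1), (δ*((n+1:ℕ):ℝ))^j / (j.factorial:ℝ)) := by
      have hsd := Spoly_div n lam
      have hfs : (((n+1).factorial : ℝ)) = ((n:ℝ)+1) * (n.factorial : ℝ) := by
        rw [Nat.factorial_succ]; push_cast; ring
      have hnfacne : (n.factorial : ℝ) ≠ 0 := by exact_mod_cast n.factorial_ne_zero
      rw [show (∑ j ∈ range (n+1), (δ*((n+1:ℕ):ℝ))^j / (j.factorial:ℝ))
            = ∑ j ∈ range (n+1), lam ^ j / (j.factorial:ℝ) from rfl,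
        ← hsd, hfs]
      have hcast : ((n+1:ℕ):ℝ) = (n:ℝ)+1 := by push_cast; ring
      rw [hlam, hcast]
      have hexpne2 : Real.exp (-(δ * ((n:ℝ)+1))) ≠ 0 := (Real.exp_pos _).ne'
      field_simp
    calc b = δ * (b / δ) := by field_simp
      _ < δ * (Real.exp (-(δ*((n+1:ℕ):ℝ))) * ∑ j ∈ range (n+1), (δ*((n+1:ℕ):ℝ))^j / (j.factorial:ℝ)) := by
          exact mul_lt_mul_of_pos_left hTK hδ0
      _ = Real.exp (-lam) * (lam * Spoly n lam) / (((n+1).factorial : ℝ)) := hglam.symm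
      _ ≤ Real.exp (-(α (n+1))) * (α (n+1) * Spoly n (α (n+1))) / (((n+1).factorial : ℝ)) := by
          gcongr
  · -- upper bound: for any b > 1, eventually E K < b
    intro b hb
    filter_upwards [Filter.eventually_ge_atTop 1] with K hK
    obtain ⟨n, hKn⟩ : ∃ n, K = n + 1 := ⟨K - 1, by omega⟩
    subst hKn
    obtain ⟨hE, hS⟩ := hmain (n+1) hK n rfl
    rw [hE]
    obtain ⟨hpos, _⟩ := hα (n+1) hK
    have hfacpos : (0:ℝ) < ((n+1).factorial : ℝ) := by
      exact_mod_cast Nat.factorial_pos (n+1)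
    have hle := g_le n (a := α (n+1)) hpos.le
    have : Real.exp (-(α (n+1))) * (α (n+1) * Spoly n (α (n+1))) / (((n+1).factorial : ℝ)) ≤ 1 := by
      rw [div_le_one hfacpos]
      exact hle
    linarith
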